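/- Let n ≥ 1, let a₁, a₂, …, aₙ be distinct positive integers, and let M be a set of n−1 positive integers not containing s = a₁ + a₂ + ⋯ + aₙ. Then there exists a permutation σ of {1, …, n} such that for every l with 1 ≤ l ≤ n, the partial sum a_{σ(1)} + a_{σ(2)} + ⋯ + a_{σ(l)} does not belong to M. -/

import Mathlib

lemma gh_take_sum_mono (l : List ℤ) (hpos : ∀ x ∈ l, 0 < x) {j k : ℕ} (hjk : j ≤ k) :
    (l.take j).sum ≤ (l.take k).sum := by
  have h1 : l.take k = l.take j ++ ((l.take k).drop j) := by
    conv_lhs => rw [← List.take_append_drop j (l.take k)]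
    rw [List.take_take, min_eq_left hjk]
  have h2 : 0 ≤ ((l.take k).drop j).sum := by
    apply List.sum_nonneg
    intro x hx
    exact le_of_lt (hpos x (List.mem_of_mem_take (List.mem_of_mem_drop hx)))
  have h3 : (l.take k).sum = (l.take j).sum + ((l.take k).drop j).sum := by
    conv_lhs => rw [h1]
    rw [List.sum_append]
  linarith

lemma gh_take_sum_lt (l : List ℤ) (hpos : ∀ x ∈ l, 0 < x) {j k : ℕ} (hjk : j < k)
    (hk : k ≤ l.length) : (l.take j).sum < (l.take k).sum := by
  have hj : j < l.length := lt_of_lt_of_le hjk hk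
  have h1 : (l.take (j+1)).sum = (l.take j).sum + l.get ⟨j, hj⟩ := List.sum_take_succ l j hj
  have h2 : (l.take (j+1)).sum ≤ (l.take k).sum := gh_take_sum_mono l hpos hjk
  have h3 : 0 < l.get ⟨j, hj⟩ := hpos _ (l.get_mem ⟨j, hj⟩)
  omega

lemma gh_take_sum_le (l : List ℤ) (hpos : ∀ x ∈ l, 0 < x) (k : ℕ) :
    (l.take k).sum ≤ l.sum := by
  have := gh_take_sum_mono l hpos (le_max_left k l.length)
  rwa [List.take_of_length_le (le_max_right k l.length)] at this

/-- If the prefix sums of `x` avoid `M`, and `d` plus any late prefix sum of `x ++ y`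
avoids `M`, then inserting `d` between `x` and `y` gives a safe list. -/
lemma gh_safe_insert (M : Finset ℤ) (x y : List ℤ) (d : ℤ)
    (h1 : ∀ k, k ≤ x.length → (x.take k).sum ∉ M)
    (h2 : ∀ k, x.length ≤ k → d + (((x ++ y)).take k).sum ∉ M) :
    ∀ k, (((x ++ [d] ++ y)).take k).sum ∉ M := by
  intro k
  rcases le_or_gt k x.length with hk | hk
  · have : (x ++ [d] ++ y).take k = x.take k := by
      rw [List.append_assoc, List.take_append_of_le_length hk]
    rw [this]; exact h1 k hk
  · set m := k - x.length - 1 with hm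
    have htk : (x ++ [d] ++ y).take k = x ++ [d] ++ y.take m := by
      rw [List.append_assoc, List.append_assoc, List.take_append,
        List.take_of_length_le (le_of_lt hk)]
      congr 1
      have hkx : k - x.length = m + 1 := by omega
      rw [hkx]
      rfl
    have htk2 : (x ++ y).take (x.length + m) = x ++ y.take m := by
      rw [List.take_append, List.take_of_length_le (by omega)]
      congr 2; omega
    have : ((x ++ [d] ++ y).take k).sum = d + (((x ++ y)).take (x.length + m)).sum := by
      rw [htk, htk2]
      simp [List.sum_append]; ring
    rw [this]
    exact h2 _ (by omega)

lemma grasshopper_finset : ∀ N : ℕ, ∀ A : Finset ℤ, A.card = N → (∀ x ∈ A, 0 < x) →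
    ∀ M : Finset ℤ, M.card < N → (∀ m ∈ M, 0 < m ∧ m < A.sum id) →
    ∃ l : List ℤ, l.Perm A.toList ∧ ∀ k : ℕ, (l.take k).sum ∉ M := by
  intro N
  induction N using Nat.strong_induction_on with
  | _ N IH =>
  intro A hA hApos M hMcard hMlt
  rcases M.eq_empty_or_nonempty with rfl | hMne
  · exact ⟨A.toList, List.Perm.refl _, by simp⟩
  have hMc1 : 1 ≤ M.card := Finset.card_pos.mpr hMne
  have hN2 : 2 ≤ N := by omega
  have hAne : A.Nonempty := by rw [← Finset.card_pos]; omega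
  set s := A.sum id with hs
  set d := A.max' hAne with hd
  have hdA : d ∈ A := A.max'_mem hAne
  set B := A.erase d with hB
  have hBcard : B.card = N - 1 := by rw [hB, Finset.card_erase_of_mem hdA, hA]
  have hBpos : ∀ x ∈ B, 0 < x := fun x hx => hApos x (Finset.mem_of_mem_erase hx)
  have hdpos : 0 < d := hApos d hdA
  have hdmax : ∀ x ∈ B, x < d := fun x hx =>
    lt_of_le_of_ne (A.le_max' x (Finset.mem_of_mem_erase hx)) (Finset.ne_of_mem_erase hx)
  set T := B.sum id with hT
  have hsum : s = d + T := (Finset.add_sum_erase A id hdA).symm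
  have hAperm : A.toList.Perm (d :: B.toList) := by
    conv_lhs => rw [← Finset.insert_erase hdA]
    exact Finset.toList_insert (Finset.notMem_erase d A)
  -- a helper to convert perm-with-toList into facts
  have listfacts : ∀ (C : Finset ℤ) (l : List ℤ), l.Perm C.toList →
      l.sum = C.sum id ∧ l.length = C.card ∧ (∀ x ∈ l, x ∈ C) := by
    intro C l hp
    refine ⟨?_, ?_, ?_⟩
    · rw [hp.sum_eq, ← Finset.sum_map_toList, List.map_id]
    · rw [hp.length_eq, Finset.length_toList]
    · intro x hx; rw [← Finset.mem_toList]; exact hp.mem_iff.mp hx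
  by_cases hbig : ∃ m ∈ M, T < m
  · obtain ⟨m₀, hm₀M, hm₀T⟩ := hbig
    by_cases hTM : T ∈ M
    case neg =>
      -- Case I : T ∉ M, a mine above T : use IH on B with mines below T, then jump d
      set M' := M.filter (fun m => m < T) with hM'
      have hM'card : M'.card < N - 1 := by
        have hsub : M' ⊆ M.erase m₀ := by
          intro x hx
          simp only [hM', Finset.mem_filter] at hx
          simp only [Finset.mem_erase]
          exact ⟨by omega, hx.1⟩
        have h1 := Finset.card_le_card hsub
        rw [Finset.card_erase_of_mem hm₀M] at h1
        omega
      obtain ⟨l', hl'perm, hl'safe⟩ := IH (N - 1) (by omega) B hBcard hBpos M' hM'card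
        (by
          intro m hm
          rw [hM', Finset.mem_filter] at hm
          exact ⟨(hMlt m hm.1).1, hm.2⟩)
      obtain ⟨hl'sum, hl'len, hl'mem⟩ := listfacts B l' hl'perm
      have hl'pos : ∀ x ∈ l', 0 < x := fun x hx => hBpos x (hl'mem x hx)
      rw [← hT] at hl'sum
      have safe : ∀ k, ((l' ++ [d] ++ []).take k).sum ∉ M := by
        apply gh_safe_insert
        · intro k _ hk
          have hle : (l'.take k).sum ≤ T := hl'sum ▸ gh_take_sum_le l' hl'pos k
          have hne : (l'.take k).sum ≠ T := fun h => hTM (h ▸ hk)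
          refine hl'safe k ?_
          rw [hM', Finset.mem_filter]
          exact ⟨hk, lt_of_le_of_ne hle hne⟩
        · intro k hk hmem
          rw [List.append_nil, List.take_of_length_le hk, hl'sum] at hmem
          have : d + T = s := hsum.symm
          rw [this] at hmem
          exact absurd (hMlt s hmem).2 (lt_irrefl s)
      refine ⟨l' ++ [d], ?_, fun k => by have := safe k; rwa [List.append_nil] at this⟩
      exact (List.perm_append_singleton d l').trans ((hl'perm.cons d).trans hAperm.symm)
    case pos =>
      -- Case IV : T ∈ M and a mine above T : pick a good last jump c
      have hTm₀ : T ≠ m₀ := ne_of_lt hm₀T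
      have hMc2 : 2 ≤ M.card := by
        have : ({T, m₀} : Finset ℤ) ⊆ M := by
          intro x hx; simp at hx; rcases hx with rfl | rfl <;> assumption
        calc 2 = ({T, m₀} : Finset ℤ).card := by rw [Finset.card_pair hTm₀]
          _ ≤ M.card := Finset.card_le_card this
      have hN3 : 3 ≤ N := by omega
      -- bad jumps
      set bad := B.filter (fun c => (T - c) ∈ M ∨ (T + d - c) ∈ M) with hbad
      have hbadcard : bad.card ≤ M.card - 1 := by
        have h1 : bad ⊆ B.filter (fun c => (T - c) ∈ M) ∪ B.filter (fun c => (T + d - c) ∈ M) := by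
          intro x hx
          simp only [hbad, Finset.mem_filter, Finset.mem_union] at hx ⊢
          tauto
        have h2 : (B.filter (fun c => (T - c) ∈ M)).card ≤ (M.filter (fun m => m < T)).card := by
          apply Finset.card_le_card_of_injOn (fun c => T - c)
          · intro c hc
            simp only [Finset.mem_coe, Finset.mem_filter] at hc ⊢
            exact ⟨hc.2, by have := hBpos c hc.1; omega⟩
          · intro x _ y _ h; simp only at h; omega
        have h3 : (B.filter (fun c => (T + d - c) ∈ M)).card ≤ (M.filter (fun m => T < m)).card := by
          apply Finset.card_le_card_of_injOn (fun c => T + d - c)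
          · intro c hc
            simp only [Finset.mem_coe, Finset.mem_filter] at hc ⊢
            exact ⟨hc.2, by have := hdmax c hc.1; omega⟩
          · intro x _ y _ h; simp only at h; omega
        have h4 : (M.filter (fun m => m < T)).card + (M.filter (fun m => T < m)).card ≤ M.card - 1 := by
          have hdisj : Disjoint (M.filter (fun m => m < T)) (M.filter (fun m => T < m)) := by
            apply Finset.disjoint_filter_filter'
            intro p hp1 hp2 x hx
            exact absurd (hp2 x hx) (not_lt_of_gt (hp1 x hx))
          have hsub : M.filter (fun m => m < T) ∪ M.filter (fun m => T < m) ⊆ M.erase T := by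
            intro x hx
            simp only [Finset.mem_union, Finset.mem_filter, Finset.mem_erase] at hx ⊢
            constructor
            · rcases hx with ⟨_, h⟩ | ⟨_, h⟩ <;> omega
            · tauto
          have := Finset.card_le_card hsub
          rw [Finset.card_union_of_disjoint hdisj] at this
          rw [Finset.card_erase_of_mem hTM] at this
          omega
        calc bad.card ≤ _ := Finset.card_le_card h1
          _ ≤ _ := Finset.card_union_le _ _
          _ ≤ M.card - 1 := by omega
      have hbadlt : bad.card < B.card := by omega
      have : ¬ B ⊆ bad := fun h => absurd (Finset.card_le_card h) (by omega)
      obtain ⟨c, hcB, hcbad⟩ := Finset.not_subset.mp this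
      have hcgood : (T - c) ∉ M ∧ (T + d - c) ∉ M := by
        rw [hbad, Finset.mem_filter] at hcbad
        push_neg at hcbad
        exact hcbad hcB
      have hcpos : 0 < c := hBpos c hcB
      have hcd : c < d := hdmax c hcB
      set C := B.erase c with hC
      have hCcard : C.card = N - 2 := by
        rw [hC, Finset.card_erase_of_mem hcB, hBcard]
        omega
      have hCsum : C.sum id = T - c := by
        have h := Finset.add_sum_erase B id hcB
        rw [hC, hT]
        simp only [id] at h ⊢
        omega
      set M'' := M.filter (fun m => m < T - c) with hM''
      have hM''card : M''.card < N - 2 := by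
        have hsub : M'' ⊆ (M.erase m₀).erase T := by
          intro x hx
          simp only [hM'', Finset.mem_filter] at hx
          simp only [Finset.mem_erase]
          refine ⟨by omega, by omega, hx.1⟩
        have h1 := Finset.card_le_card hsub
        rw [Finset.card_erase_of_mem (by rw [Finset.mem_erase]; exact ⟨hTm₀, hTM⟩),
          Finset.card_erase_of_mem hm₀M] at h1
        omega
      obtain ⟨l'', hl''perm, hl''safe⟩ := IH (N - 2) (by omega) C hCcard
        (fun x hx => hBpos x (Finset.mem_of_mem_erase hx)) M'' hM''card
        (by
          intro m hm
          rw [hM'', Finset.mem_filter] at hm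
          exact ⟨(hMlt m hm.1).1, by rw [hCsum]; exact hm.2⟩)
      obtain ⟨hl''sum, hl''len, hl''mem⟩ := listfacts C l'' hl''perm
      have hl''pos : ∀ x ∈ l'', 0 < x := fun x hx =>
        hBpos x (Finset.mem_of_mem_erase (hl''mem x hx))
      rw [hCsum] at hl''sum
      -- safety of l'' ++ [d]
      have inner : ∀ k, ((l'' ++ [d] ++ []).take k).sum ∉ M := by
        apply gh_safe_insert
        · intro k _ hk
          have hle : (l''.take k).sum ≤ T - c := hl''sum ▸ gh_take_sum_le l'' hl''pos k
          have hne : (l''.take k).sum ≠ T - c := fun h => hcgood.1 (h ▸ hk)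
          have := hl''safe k
          rw [hM'', Finset.mem_filter] at this
          push_neg at this
          exact hne (le_antisymm hle (by by_contra h; push_neg at h; exact absurd (this hk) (by omega)))
        · intro k hk hmem
          have heq : d + (T - c) = T + d - c := by ring
          rw [List.append_nil, List.take_of_length_le hk, hl''sum, heq] at hmem
          exact hcgood.2 hmem
      have inner' : ∀ k, ((l'' ++ [d]).take k).sum ∉ M := by
        intro k; have := inner k; rwa [List.append_nil] at this
      have outer : ∀ k, (((l'' ++ [d]) ++ [c] ++ []).take k).sum ∉ M := by
        apply gh_safe_insert
        · intro k _; exact inner' k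
        · intro k hk hmem
          rw [List.append_nil, List.take_of_length_le hk, List.sum_append, hl''sum] at hmem
          simp only [List.sum_cons, List.sum_nil] at hmem
          have : c + (T - c + (d + 0)) = s := by rw [hsum]; ring
          rw [this] at hmem
          exact absurd (hMlt s hmem).2 (lt_irrefl s)
      refine ⟨l'' ++ [d] ++ [c], ?_, fun k => by have := outer k; rwa [List.append_nil] at this⟩
      · -- permutation bookkeeping
        have p0 : (l'' ++ [d] ++ [c]) = l'' ++ (d :: [c]) := by
          rw [List.append_assoc]; rfl
        have p1 : (l'' ++ [d] ++ [c]).Perm (d :: c :: l'') := by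
          rw [p0]
          exact List.perm_middle.trans ((List.perm_append_singleton c l'').cons d)
        have p2 : (c :: l'').Perm B.toList := by
          have h1 : (c :: l'').Perm (c :: C.toList) := hl''perm.cons c
          have h2 : (insert c C).toList.Perm (c :: C.toList) :=
            Finset.toList_insert (Finset.notMem_erase c B)
          rw [hC, Finset.insert_erase hcB] at h2
          exact h1.trans h2.symm
        exact p1.trans ((p2.cons d).trans hAperm.symm)
  · -- Cases II/III : all mines ≤ T
    push_neg at hbig
    set m' := M.max' hMne with hm'
    have hm'M : m' ∈ M := M.max'_mem hMne
    have hm'pos : 0 < m' := (hMlt m' hm'M).1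
    have hm'T : m' ≤ T := hbig m' hm'M
    have hm'max : ∀ m ∈ M, m ≤ m' := fun m hm => M.le_max' m hm
    set M' := M.erase m' with hM'
    have hM'card : M'.card < N - 1 := by
      rw [hM', Finset.card_erase_of_mem hm'M]; omega
    obtain ⟨l', hl'perm, hl'safe⟩ := IH (N - 1) (by omega) B hBcard hBpos M' hM'card
      (by
        intro m hm
        rw [hM', Finset.mem_erase] at hm
        exact ⟨(hMlt m hm.2).1,
          lt_of_lt_of_le (lt_of_le_of_ne (hm'max m hm.2) hm.1) hm'T⟩)
    obtain ⟨hl'sum, hl'len, hl'mem⟩ := listfacts B l' hl'perm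
    have hl'pos : ∀ x ∈ l', 0 < x := fun x hx => hBpos x (hl'mem x hx)
    rw [← hT] at hl'sum
    by_cases hhit : ∃ k, k ≤ l'.length ∧ (l'.take k).sum = m'
    · -- a partial sum hits the largest mine : insert the big jump just before
      obtain ⟨k₀, hk₀len, hk₀⟩ := hhit
      have hk₀pos : 1 ≤ k₀ := by
        by_contra h
        push_neg at h
        interval_cases k₀
        simp at hk₀
        omega
      set j := k₀ - 1 with hj
      have hjlt : j < l'.length := by omega
      have hjsucc : j + 1 = k₀ := by omega
      have hstep : (l'.take k₀).sum = (l'.take j).sum + l'.get ⟨j, hjlt⟩ := by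
        rw [← hjsucc]; exact List.sum_take_succ l' j hjlt
      have hdgt : l'.get ⟨j, hjlt⟩ < d := hdmax _ (hl'mem _ (l'.get_mem ⟨j, hjlt⟩))
      have key : ∀ k, j ≤ k → m' < d + (l'.take k).sum := by
        intro k hk
        have h1 : (l'.take j).sum ≤ (l'.take k).sum := gh_take_sum_mono l' hl'pos hk
        omega
      refine ⟨l'.take j ++ [d] ++ l'.drop j, ?_, ?_⟩
      · have hmid : (l'.take j ++ [d] ++ l'.drop j).Perm (d :: l') := by
          have h := List.perm_middle (l₁ := l'.take j) (a := d) (l₂ := l'.drop j)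
          rw [List.take_append_drop] at h
          rw [List.append_assoc]
          exact h
        exact hmid.trans ((hl'perm.cons d).trans hAperm.symm)
      · apply gh_safe_insert
        · intro k hk hmem
          have hkj : k ≤ j := by
            rw [List.length_take] at hk; omega
          rw [List.take_take, min_eq_left hkj] at hmem
          have hlt : (l'.take k).sum < m' := by
            have h1 : (l'.take k).sum ≤ (l'.take j).sum := gh_take_sum_mono l' hl'pos hkj
            have h2 : (l'.take j).sum < (l'.take k₀).sum :=
              gh_take_sum_lt l' hl'pos (by omega) hk₀len
            omega
          exact hl'safe k (by rw [hM', Finset.mem_erase]; exact ⟨ne_of_lt hlt, hmem⟩)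
        · intro k hk hmem
          rw [List.take_append_drop] at hmem
          rw [List.length_take] at hk
          have hkey := key k (by omega)
          have := hm'max _ hmem
          omega
    · -- no partial sum hits the largest mine : just append the big jump
      push_neg at hhit
      have safe : ∀ k, ((l' ++ [d] ++ []).take k).sum ∉ M := by
        apply gh_safe_insert
        · intro k hk hmem
          refine hl'safe k ?_
          rw [hM', Finset.mem_erase]
          exact ⟨hhit k hk, hmem⟩
        · intro k hk hmem
          rw [List.append_nil, List.take_of_length_le hk, hl'sum] at hmem
          have heq : d + T = s := hsum.symm
          rw [heq] at hmem
          exact absurd (hMlt s hmem).2 (lt_irrefl s)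
      refine ⟨l' ++ [d], ?_, fun k => by have := safe k; rwa [List.append_nil] at this⟩
      exact (List.perm_append_singleton d l').trans ((hl'perm.cons d).trans hAperm.symm)

lemma gh_filter_sum (n : ℕ) (g : Fin n → ℤ) (w : List ℤ) (hlen : w.length = n)
    (hg : ∀ k : Fin n, g k = w.get ⟨k.1, by rw [hlen]; exact k.2⟩) :
    ∀ L : ℕ, L ≤ n →
      ∑ k ∈ Finset.univ.filter (fun k : Fin n => (k : ℕ) < L), g k = (w.take L).sum := by
  intro L
  induction L with
  | zero => intro _; simp
  | succ m ihm =>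
    intro hm
    have hmn : m < n := by omega
    have hmw : m < w.length := by omega
    have hins : Finset.univ.filter (fun k : Fin n => (k : ℕ) < m + 1) =
        insert ⟨m, hmn⟩ (Finset.univ.filter (fun k : Fin n => (k : ℕ) < m)) := by
      ext k
      simp only [Finset.mem_filter, Finset.mem_insert, Finset.mem_univ, true_and, Fin.ext_iff]
      omega
    rw [hins, Finset.sum_insert (by simp), ihm (by omega), List.sum_take_succ w m hmw, hg]
    simp [List.get_eq_getElem, add_comm]

theorem gh_main (n : ℕ) (hn : 1 ≤ n) (a : Fin n → ℤ)
    (ha_pos : ∀ i, 0 < a i) (ha_inj : Function.Injective a)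
    (M : Finset ℤ) (hM_card : M.card = n - 1) (hM_pos : ∀ m ∈ M, 0 < m)
    (hs : (∑ i, a i) ∉ M) :
    ∃ σ : Equiv.Perm (Fin n), ∀ l : ℕ, 1 ≤ l → l ≤ n →
      (∑ k ∈ Finset.univ.filter (fun k : Fin n => (k : ℕ) < l), a (σ k)) ∉ M := by
  classical
  set S := ∑ i, a i with hS
  set A := Finset.univ.image a with hA
  have hAcard : A.card = n := by
    rw [hA, Finset.card_image_of_injective _ ha_inj, Finset.card_univ, Fintype.card_fin]
  have hApos : ∀ x ∈ A, 0 < x := by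
    intro x hx
    rw [hA, Finset.mem_image] at hx
    obtain ⟨i, _, rfl⟩ := hx
    exact ha_pos i
  have hAsum : A.sum id = S := by
    rw [hA, Finset.sum_image (fun x _ y _ h => ha_inj h)]
    simp [hS]
  set M' := M.filter (fun m => m < S) with hM'
  have hM'card : M'.card < n := by
    have := Finset.card_filter_le M (fun m => m < S)
    rw [hM']
    omega
  obtain ⟨w, hwperm, hwsafe⟩ := grasshopper_finset n A hAcard hApos M' hM'card
    (by
      intro m hm
      rw [hM', Finset.mem_filter] at hm
      exact ⟨hM_pos m hm.1, by rw [hAsum]; exact hm.2⟩)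
  have hwlen : w.length = n := by
    rw [hwperm.length_eq, Finset.length_toList, hAcard]
  have hwsum : w.sum = S := by
    rw [hwperm.sum_eq, ← hAsum, ← Finset.sum_map_toList, List.map_id]
  have hwpos : ∀ x ∈ w, 0 < x := by
    intro x hx
    refine hApos x ?_
    rw [← Finset.mem_toList]
    exact hwperm.subset hx
  have hwnd : w.Nodup := hwperm.nodup_iff.mpr A.nodup_toList
  have hex : ∀ k : Fin n, ∃ i : Fin n, a i = w.get ⟨k.1, by rw [hwlen]; exact k.2⟩ := by
    intro k
    have : w.get ⟨k.1, by rw [hwlen]; exact k.2⟩ ∈ A := by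
      rw [← Finset.mem_toList]
      exact hwperm.subset (w.get_mem _)
    rw [hA, Finset.mem_image] at this
    obtain ⟨i, _, hi⟩ := this
    exact ⟨i, hi⟩
  set f : Fin n → Fin n := fun k => (hex k).choose with hf
  have hfspec : ∀ k : Fin n, a (f k) = w.get ⟨k.1, by rw [hwlen]; exact k.2⟩ :=
    fun k => (hex k).choose_spec
  have hfinj : Function.Injective f := by
    intro k k' h
    have : w.get ⟨k.1, by rw [hwlen]; exact k.2⟩ = w.get ⟨k'.1, by rw [hwlen]; exact k'.2⟩ := by
      rw [← hfspec, ← hfspec, h]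
    have := List.Nodup.get_inj_iff hwnd |>.mp this
    exact Fin.ext (by simpa [Fin.ext_iff] using this)
  refine ⟨Equiv.ofBijective f (Finite.injective_iff_bijective.mp hfinj), ?_⟩
  intro L hL1 hLn
  have hsum := gh_filter_sum n (fun k => a (f k)) w hwlen hfspec L hLn
  simp only [Equiv.ofBijective_apply]
  rw [hsum]
  intro hmem
  have h1 : (w.take L).sum ∉ M' := hwsafe L
  have h2 : (w.take L).sum ≤ S := hwsum ▸ gh_take_sum_le w hwpos L
  have h3 : (w.take L).sum ≠ S := fun h => hs (h ▸ hmem)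
  exact h1 (by rw [hM', Finset.mem_filter]; exact ⟨hmem, lt_of_le_of_ne h2 h3⟩)

/-- The grasshopper problem (IMO 2009, Problem 6): for distinct positive
integers `a 0, …, a (n-1)` and a set `M` of `n - 1` positive integers not
containing `s = ∑ i, a i`, there is an order of the jumps such that no
partial sum lands in `M`. -/
theorem grasshopper_int (n : ℕ) (hn : 1 ≤ n) (a : Fin n → ℤ)
    (ha_pos : ∀ i, 0 < a i) (ha_inj : Function.Injective a)
    (M : Finset ℤ) (hM_card : M.card = n - 1) (hM_pos : ∀ m ∈ M, 0 < m)
    (hs : (∑ i, a i) ∉ M) :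
    ∃ σ : Equiv.Perm (Fin n), ∀ l : ℕ, 1 ≤ l → l ≤ n →
      (∑ k ∈ Finset.univ.filter (fun k : Fin n => (k : ℕ) < l), a (σ k)) ∉ M := by
  exact gh_main n hn a ha_pos ha_inj M hM_card hM_pos hs
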